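/- arXiv:2403.11544 — 4 statements merged into one kernel-verified Lean document; each statement's English description precedes it below -/
import Mathlib

section
/- Let $\sigma_\eta: \mathbb{R}^A \to \Delta^{A-1}$ be the softmax map $\sigma_\eta(z)_a = \exp(\eta z_a)/\sum_{a'}\exp(\eta z_{a'})$ with parameter $\eta > 0$. Then for all $z, z' \in \mathbb{R}^A$, $\|\sigma_\eta(z) - \sigma_\eta(z')\|_1 \leq \eta \|z - z'\|_\infty$. -/
open BigOperators

noncomputable def softmax {A : ℕ} (η : ℝ) (z : Fin A → ℝ) (a : Fin A) : ℝ :=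
  Real.exp (η * z a) / ∑ a', Real.exp (η * z a')

lemma softmax_aux {A : ℕ} {η c : ℝ} (hη : 0 < η) (hc : 0 < c)
    (ε δ E : Fin A → ℝ) (hε : ∀ a, |ε a| = 1) (hδ : ∀ a, |δ a| ≤ c)
    (hE : ∀ a, 0 < E a) :
    |(∑ a, ε a * (E a * (η * δ a))) * (∑ a, E a) -
      (∑ a, ε a * E a) * (∑ a, E a * (η * δ a))| ≤ η * c * (∑ a, E a) ^ 2 := by
  set S := ∑ a, E a with hS
  set T := ∑ a, E a * δ a with hT
  have hnum : (∑ a, ε a * (E a * (η * δ a))) * (∑ a, E a) -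
      (∑ a, ε a * E a) * (∑ a, E a * (η * δ a)) =
      ∑ a, ∑ b, η * (ε a * E a * E b * (δ a - δ b)) := by
    rw [Finset.sum_mul_sum, Finset.sum_mul_sum, ← Finset.sum_sub_distrib]
    refine Finset.sum_congr rfl fun a _ => ?_
    rw [← Finset.sum_sub_distrib]
    exact Finset.sum_congr rfl fun b _ => by ring
  have hterm : ∀ a b : Fin A, c * |η * (ε a * E a * E b * (δ a - δ b))| ≤
      η * (E a * E b * (c ^ 2 - δ a * δ b)) := by
    intro a b
    have hda := abs_le.mp (hδ a)
    have hdb := abs_le.mp (hδ b)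
    have h1 : |δ a - δ b| * c ≤ c ^ 2 - δ a * δ b := by
      rcases le_total (δ a) (δ b) with h | h
      · rw [abs_of_nonpos (by linarith)]
        nlinarith [mul_nonneg (by linarith : (0:ℝ) ≤ c + δ a) (by linarith : (0:ℝ) ≤ c - δ b)]
      · rw [abs_of_nonneg (by linarith)]
        nlinarith [mul_nonneg (by linarith : (0:ℝ) ≤ c + δ b) (by linarith : (0:ℝ) ≤ c - δ a)]
    have h2 : |η * (ε a * E a * E b * (δ a - δ b))| =
        η * (E a * E b * |δ a - δ b|) := by
      rw [abs_mul, abs_mul, abs_mul, abs_mul, hε a, abs_of_pos hη,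
        abs_of_pos (hE a), abs_of_pos (hE b), one_mul]
    rw [h2]
    have hEab : 0 < E a * E b := mul_pos (hE a) (hE b)
    nlinarith [mul_le_mul_of_nonneg_left h1 hEab.le]
  have hsum2 : ∑ a, ∑ b, η * (E a * E b * (c ^ 2 - δ a * δ b)) =
      η * (c ^ 2 * (S * S) - T * T) := by
    rw [hS, hT, Finset.sum_mul_sum, Finset.sum_mul_sum]
    simp only [Finset.mul_sum, ← Finset.sum_sub_distrib]
    exact Finset.sum_congr rfl fun a _ => Finset.sum_congr rfl fun b _ => by ring
  have hbound : c * |(∑ a, ε a * (E a * (η * δ a))) * (∑ a, E a) -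
      (∑ a, ε a * E a) * (∑ a, E a * (η * δ a))| ≤ η * c ^ 2 * S ^ 2 := by
    rw [hnum]
    calc c * |∑ a, ∑ b, η * (ε a * E a * E b * (δ a - δ b))|
        ≤ c * ∑ a, ∑ b, |η * (ε a * E a * E b * (δ a - δ b))| := by
          refine mul_le_mul_of_nonneg_left ?_ hc.le
          refine (Finset.abs_sum_le_sum_abs _ _).trans ?_
          exact Finset.sum_le_sum fun a _ => Finset.abs_sum_le_sum_abs _ _
      _ = ∑ a, ∑ b, c * |η * (ε a * E a * E b * (δ a - δ b))| := by
          rw [Finset.mul_sum]; exact Finset.sum_congr rfl fun a _ => Finset.mul_sum _ _ _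
      _ ≤ ∑ a, ∑ b, η * (E a * E b * (c ^ 2 - δ a * δ b)) := by
          exact Finset.sum_le_sum fun a _ => Finset.sum_le_sum fun b _ => hterm a b
      _ = η * (c ^ 2 * (S * S) - T * T) := hsum2
      _ ≤ η * c ^ 2 * S ^ 2 := by nlinarith [sq_nonneg T]
  calc |(∑ a, ε a * (E a * (η * δ a))) * (∑ a, E a) -
      (∑ a, ε a * E a) * (∑ a, E a * (η * δ a))|
      = c * |_| / c := by rw [mul_div_cancel_left₀ _ hc.ne']
    _ ≤ η * c ^ 2 * S ^ 2 / c := by gcongr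
    _ = η * c * S ^ 2 := by field_simp

/-- The softmax map with parameter `η > 0` is `η`-Lipschitz from `ℓ∞` to `ℓ1`. -/
theorem softmax_l1_lipschitz {A : ℕ} (hA : 0 < A) {η : ℝ} (hη : 0 < η)
    (z z' : Fin A → ℝ) :
    ∑ a, |softmax η z a - softmax η z' a| ≤ η * ‖z - z'‖ := by
  haveI : Nonempty (Fin A) := Fin.pos_iff_nonempty.mp hA
  by_cases hzz : z = z'
  · subst hzz; simp [mul_nonneg hη.le (norm_nonneg _)]
  · set c := ‖z - z'‖ with hcdef
    have hc : 0 < c := by rw [hcdef, norm_pos_iff]; exact sub_ne_zero.mpr hzz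
    set δ : Fin A → ℝ := fun a => z' a - z a with hδdef
    have hδ : ∀ a, |δ a| ≤ c := by
      intro a
      have h1 := norm_le_pi_norm (z - z') a
      simp only [Pi.sub_apply, Real.norm_eq_abs] at h1
      rw [hδdef]
      calc |z' a - z a| = |z a - z' a| := abs_sub_comm _ _
        _ ≤ c := h1
    set ε : Fin A → ℝ := fun a => if softmax η z a ≤ softmax η z' a then 1 else -1
      with hεdef
    have hε : ∀ a, |ε a| = 1 := by
      intro a; rw [hεdef]; dsimp only; split <;> simp
    set g : Fin A → ℝ → ℝ := fun a t => Real.exp (η * (z a + t * δ a)) with hgdef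
    set S : ℝ → ℝ := fun t => ∑ a, g a t with hSdef
    set N : ℝ → ℝ := fun t => ∑ a, ε a * g a t with hNdef
    have hgpos : ∀ a t, 0 < g a t := fun a t => Real.exp_pos _
    have hSpos : ∀ t, 0 < S t :=
      fun t => Finset.sum_pos (fun a _ => hgpos a t) Finset.univ_nonempty
    have hgderiv : ∀ a t, HasDerivAt (g a) (g a t * (η * δ a)) t := by
      intro a t
      have h1 : HasDerivAt (fun t : ℝ => η * (z a + t * δ a)) (η * δ a) t := by
        simpa using (((hasDerivAt_id t).mul_const (δ a)).const_add (z a)).const_mul η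
      simpa [hgdef] using h1.exp
    set h : ℝ → ℝ := fun t => N t / S t with hhdef
    set D : ℝ → ℝ := fun t =>
      ((∑ a, ε a * (g a t * (η * δ a))) * S t - N t * (∑ a, g a t * (η * δ a))) / S t ^ 2
      with hDdef
    have hhderiv : ∀ t, HasDerivAt h (D t) t := fun t =>
      (HasDerivAt.fun_sum fun a _ => (hgderiv a t).const_mul (ε a)).div
        (HasDerivAt.fun_sum fun a _ => hgderiv a t) (hSpos t).ne'
    have hDbound : ∀ t, ‖D t‖ ≤ η * c := by
      intro t
      have haux := softmax_aux hη hc ε δ (fun a => g a t) hε hδ (fun a => hgpos a t)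
      rw [hDdef]
      dsimp only
      rw [Real.norm_eq_abs, abs_div, abs_of_pos (pow_pos (hSpos t) 2),
        div_le_iff₀ (pow_pos (hSpos t) 2)]
      calc |(∑ a, ε a * (g a t * (η * δ a))) * S t - N t * (∑ a, g a t * (η * δ a))|
          = |(∑ a, ε a * (g a t * (η * δ a))) * (∑ a, g a t) -
              (∑ a, ε a * g a t) * (∑ a, g a t * (η * δ a))| := by rw [hSdef, hNdef]
        _ ≤ η * c * (∑ a, g a t) ^ 2 := haux
        _ = η * c * S t ^ 2 := by rw [hSdef]
    have hmvt : ‖h 1 - h 0‖ ≤ η * c * ‖(1 : ℝ) - 0‖ :=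
      Convex.norm_image_sub_le_of_norm_hasDerivWithin_le
        (fun x _ => (hhderiv x).hasDerivWithinAt)
        (fun x _ => hDbound x) convex_univ (Set.mem_univ 0) (Set.mem_univ 1)
    have h0 : h 0 = ∑ a, ε a * softmax η z a := by
      rw [hhdef, hNdef, hSdef, hgdef]
      simp only [zero_mul, add_zero, softmax]
      rw [Finset.sum_div]
      exact Finset.sum_congr rfl fun a _ => by rw [mul_div_assoc]
    have h1' : h 1 = ∑ a, ε a * softmax η z' a := by
      rw [hhdef, hNdef, hSdef, hgdef, hδdef]
      simp only [one_mul, add_sub_cancel, softmax]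
      rw [Finset.sum_div]
      exact Finset.sum_congr rfl fun a _ => by rw [mul_div_assoc]
    have hsum : ∑ a, |softmax η z a - softmax η z' a| = h 1 - h 0 := by
      rw [h0, h1', ← Finset.sum_sub_distrib]
      refine Finset.sum_congr rfl fun a _ => ?_
      rw [hεdef]; dsimp only
      split
      · rename_i hle
        rw [abs_of_nonpos (by linarith)]; ring
      · rename_i hle
        push_neg at hle
        rw [abs_of_nonneg (by linarith)]; ring
    rw [hsum]
    calc h 1 - h 0 ≤ ‖h 1 - h 0‖ := le_abs_self _
      _ ≤ η * c * ‖(1 : ℝ) - 0‖ := hmvt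
      _ = η * c := by norm_num
end

section
/- Let $\Lambda = \lambda I + \sum_{j=1}^{n} \phi_j \phi_j^\top$ where $\lambda > 0$ and $\phi_1, \dots, \phi_n \in \mathbb{R}^d$. Then for any vector $\psi \in \mathbb{R}^d$, $\sum_{j=1}^{n} (\psi^\top \Lambda^{-1} \phi_j)^2 \leq \psi^\top \Lambda^{-1} \psi$. -/
open BigOperators Matrix

lemma vecMulVec_mulVec' {d : ℕ} (w v u : Fin d → ℝ) :
    vecMulVec w v *ᵥ u = (v ⬝ᵥ u) • w := by
  ext i
  simp [vecMulVec_apply, mulVec, dotProduct, Finset.mul_sum, mul_assoc, mul_comm, mul_left_comm]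

lemma vecMulVec_self_posSemidef {d : ℕ} (x : Fin d → ℝ) :
    (vecMulVec x x).PosSemidef := by
  rw [Matrix.posSemidef_iff_dotProduct_mulVec]
  constructor
  · ext i j
    simp [vecMulVec_apply, mul_comm]
  · intro y
    rw [vecMulVec_mulVec']
    simp only [star_trivial, dotProduct_smul, smul_eq_mul]
    rw [dotProduct_comm y x]
    exact mul_self_nonneg _

/-- For the regularized Gram matrix `Λ = λ I + ∑ φⱼ φⱼᵀ`, the sum of squared
correlations `(ψᵀ Λ⁻¹ φⱼ)²` is at most the quadratic form `ψᵀ Λ⁻¹ ψ`. -/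
theorem sum_sq_corr_le_quadform {d n : ℕ} (lam : ℝ) (hlam : 0 < lam)
    (φ : Fin n → Fin d → ℝ) (Λ : Matrix (Fin d) (Fin d) ℝ)
    (hΛ : Λ = lam • (1 : Matrix (Fin d) (Fin d) ℝ) + ∑ j, vecMulVec (φ j) (φ j))
    (ψ : Fin d → ℝ) :
    ∑ j, (ψ ⬝ᵥ (Λ⁻¹ *ᵥ φ j)) ^ 2 ≤ ψ ⬝ᵥ (Λ⁻¹ *ᵥ ψ) := by
  -- positivity of Λ
  have hsum : (∑ j, vecMulVec (φ j) (φ j)).PosSemidef := by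
    apply Finset.sum_induction _ Matrix.PosSemidef
    · exact fun a b ha hb => ha.add hb
    · exact Matrix.PosSemidef.zero
    · exact fun j _ => vecMulVec_self_posSemidef (φ j)
  have hsm : (lam • (1 : Matrix (Fin d) (Fin d) ℝ)).PosDef := by
    rw [Matrix.smul_one_eq_diagonal]
    rw [Matrix.posDef_iff_dotProduct_mulVec]
    refine ⟨?_, fun x hx => ?_⟩
    · ext i j
      simp [Matrix.diagonal_apply, eq_comm]
    · simp only [star_trivial, dotProduct, mulVec_diagonal]
      have hxx : 0 < ∑ i, x i * x i := by
        rcases (Function.ne_iff).1 hx with ⟨i, hi⟩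
        have h1 : 0 < x i * x i := mul_self_pos.2 (by simpa using hi)
        refine lt_of_lt_of_le h1 ?_
        exact Finset.single_le_sum (f := fun i => x i * x i)
          (fun i _ => mul_self_nonneg _) (Finset.mem_univ i)
      have h2 : ∑ i, x i * (lam * x i) = lam * ∑ i, x i * x i := by
        rw [Finset.mul_sum]
        exact Finset.sum_congr rfl fun i _ => by ring
      rw [h2]
      positivity
  have hpd : Λ.PosDef := hΛ ▸ hsm.add_posSemidef hsum
  have hunit : IsUnit Λ := hpd.isUnit
  have hherm : Λ⁻¹.IsHermitian := hpd.isHermitian.inv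
  have ht : Λ⁻¹ᵀ = Λ⁻¹ := by
    rw [← Matrix.conjTranspose_eq_transpose_of_trivial]
    exact hherm
  set u : Fin d → ℝ := Λ⁻¹ *ᵥ ψ with hu
  have hcor : ∀ j, ψ ⬝ᵥ (Λ⁻¹ *ᵥ φ j) = u ⬝ᵥ φ j := by
    intro j
    rw [dotProduct_mulVec, ← Matrix.mulVec_transpose, ht, hu]
  have hΛu : Λ *ᵥ u = ψ := by
    rw [hu, Matrix.mulVec_mulVec,
      Matrix.mul_nonsing_inv _ (Matrix.isUnit_iff_isUnit_det _ |>.1 hunit), Matrix.one_mulVec]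
  have hsumvec : (∑ j, vecMulVec (φ j) (φ j)) *ᵥ u = ∑ j, (φ j ⬝ᵥ u) • φ j := by
    ext i
    simp only [mulVec, dotProduct, Matrix.sum_apply, Finset.sum_apply, vecMulVec_apply,
      Pi.smul_apply, smul_eq_mul, Finset.sum_mul, Finset.mul_sum]
    rw [Finset.sum_comm]
    exact Finset.sum_congr rfl fun j _ => Finset.sum_congr rfl fun k _ => by ring
  have hrhs : ψ ⬝ᵥ u = lam * (u ⬝ᵥ u) + ∑ j, (u ⬝ᵥ φ j) ^ 2 := by
    conv_lhs => rw [← hΛu]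
    rw [hΛ, Matrix.add_mulVec, add_dotProduct]
    congr 1
    · rw [Matrix.smul_mulVec, Matrix.one_mulVec, smul_dotProduct]
      simp [dotProduct_comm]
    · rw [hsumvec]
      have : (∑ j, (φ j ⬝ᵥ u) • φ j) ⬝ᵥ u = ∑ j, ((φ j ⬝ᵥ u) • φ j) ⬝ᵥ u := by
        simp only [dotProduct, Finset.sum_apply, Pi.smul_apply, smul_eq_mul, Finset.sum_mul]
        rw [Finset.sum_comm]
      rw [this]
      refine Finset.sum_congr rfl fun j _ => ?_
      rw [smul_dotProduct, smul_eq_mul, dotProduct_comm (φ j) u]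
      ring
  have hψu : ψ ⬝ᵥ (Λ⁻¹ *ᵥ ψ) = ψ ⬝ᵥ u := rfl
  rw [hψu, hrhs]
  have hL : ∑ j, (ψ ⬝ᵥ (Λ⁻¹ *ᵥ φ j)) ^ 2 = ∑ j, (u ⬝ᵥ φ j) ^ 2 :=
    Finset.sum_congr rfl fun j _ => by rw [hcor j]
  rw [hL]
  have huu : 0 ≤ u ⬝ᵥ u := Finset.sum_nonneg fun i _ => mul_self_nonneg _
  nlinarith [mul_nonneg hlam.le huu]
end

section
/- Fix $\tau, \lambda > 0$ and a feature map $\phi$ with values in the closed unit ball of $\mathbb{R}^d$. Suppose a finite sequence of vectors $\phi_1, \dots, \phi_n$ (from the range of $\phi$) satisfies: for each $j$, $\phi_j^\top \Lambda_{j-1}^{-1} \phi_j > \tau$ where $\Lambda_{j-1} = \lambda I + \sum_{l < j} \phi_l \phi_l^\top$. Then $n \leq \frac{e}{e-1}\cdot\frac{1+\tau}{\tau}\, d \big( \log(1 + 1/\tau) + \log(1 + 1/\lambda) \big)$. -/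
open BigOperators Matrix

section Helpers

lemma smul_one_posDef {d : ℕ} {lam : ℝ} (hlam : 0 < lam) :
    (lam • (1 : Matrix (Fin d) (Fin d) ℝ)).PosDef := by
  constructor
  · unfold Matrix.IsHermitian; simp
  · exact (Matrix.PosDef.one.smul hlam).2

lemma psd_vecMulVec {d : ℕ} (v : Fin d → ℝ) : (vecMulVec v v).PosSemidef := by
  rw [vecMulVec_eq Unit]
  have h := Matrix.posSemidef_conjTranspose_mul_self (replicateRow Unit v)
  simpa using h

lemma det_rank_one {d : ℕ} {A : Matrix (Fin d) (Fin d) ℝ} (hA : A.PosDef) (v : Fin d → ℝ) :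
    (A + vecMulVec v v).det = A.det * (1 + v ⬝ᵥ (A⁻¹ *ᵥ v)) := by
  rw [vecMulVec_eq Unit, Matrix.det_add_replicateCol_mul_replicateRow hA.det_pos.ne'.isUnit]
  congr 1
  rw [Matrix.det_unique]
  simp only [Matrix.add_apply, Matrix.one_apply_eq, Matrix.mul_apply, Matrix.replicateRow_apply,
    Matrix.replicateCol_apply, Matrix.mulVec, dotProduct, Finset.sum_mul, Finset.mul_sum]
  rw [Finset.sum_comm]; ring_nf

lemma trace_eq_sum_eigs {d : ℕ} {A : Matrix (Fin d) (Fin d) ℝ} (hA : A.IsHermitian) :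
    A.trace = ∑ i, hA.eigenvalues i := by
  simpa using hA.trace_eq_sum_eigenvalues

lemma psd_trace_nonneg {d : ℕ} {A : Matrix (Fin d) (Fin d) ℝ} (hA : A.PosSemidef) :
    0 ≤ A.trace := by
  rw [trace_eq_sum_eigs hA.isHermitian]
  exact Finset.sum_nonneg fun i _ => hA.eigenvalues_nonneg i

lemma det_le_trace_div_pow {d : ℕ} (hd : 0 < d) {A : Matrix (Fin d) (Fin d) ℝ}
    (hA : A.PosSemidef) : A.det ≤ (A.trace / d) ^ d := by
  have hH := hA.isHermitian
  have hev : ∀ i, 0 ≤ hH.eigenvalues i := hA.eigenvalues_nonneg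
  have hdet : A.det = ∏ i, hH.eigenvalues i := by
    have := hH.det_eq_prod_eigenvalues; simpa using this
  rw [hdet, trace_eq_sum_eigs hH]
  have hgm := Real.geom_mean_le_arith_mean_weighted Finset.univ (fun _ => 1 / d)
    hH.eigenvalues (fun i _ => by positivity)
    (by simp [Finset.card_univ]; field_simp) (fun i _ => hev i)
  rw [Real.finset_prod_rpow _ _ (fun i _ => hev i)] at hgm
  have h1 : ∑ i, (1 / (d:ℝ)) * hH.eigenvalues i = (∑ i, hH.eigenvalues i) / d := by
    rw [← Finset.mul_sum]; ring
  rw [h1] at hgm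
  have hprod : (0:ℝ) ≤ ∏ i, hH.eigenvalues i := Finset.prod_nonneg (fun i _ => hev i)
  calc ∏ i, hH.eigenvalues i
      = ((∏ i, hH.eigenvalues i) ^ ((1:ℝ) / d)) ^ (d:ℕ) := by
        rw [← Real.rpow_natCast (_ ^ ((1:ℝ)/d)) d, ← Real.rpow_mul hprod]
        rw [one_div, inv_mul_cancel₀ (by exact_mod_cast hd.ne'), Real.rpow_one]
    _ ≤ ((∑ i, hH.eigenvalues i) / d) ^ (d:ℕ) :=
        pow_le_pow_left₀ (Real.rpow_nonneg hprod _) hgm d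

lemma tau_div_le_log {τ : ℝ} (hτ : 0 < τ) : τ / (1 + τ) ≤ Real.log (1 + τ) := by
  have h := Real.log_le_sub_one_of_pos (show (0:ℝ) < (1+τ)⁻¹ by positivity)
  rw [Real.log_inv] at h
  have h2 : (1+τ)⁻¹ - 1 = -(τ/(1+τ)) := by field_simp; ring
  linarith [h2 ▸ h]

lemma log_le_div_e {x : ℝ} (hx : 0 < x) : Real.log x ≤ x / Real.exp 1 := by
  have h := Real.log_le_sub_one_of_pos (show 0 < x / Real.exp 1 by positivity)
  rw [Real.log_div hx.ne' (Real.exp_pos 1).ne', Real.log_exp] at h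
  linarith

lemma final_calc {d : ℕ} (hd : 0 < d) {τ lam N : ℝ} (hτ : 0 < τ) (hlam : 0 < lam)
    (hN : 0 ≤ N)
    (h : N * Real.log (1 + τ) ≤ d * Real.log (1 + N / (d * lam))) :
    N ≤ (Real.exp 1 / (Real.exp 1 - 1)) * ((1 + τ) / τ) * d *
      (Real.log (1 + 1 / τ) + Real.log (1 + 1 / lam)) := by
  set E := Real.exp 1 with hE
  have hE2 : (2:ℝ) ≤ E := by have := Real.add_one_le_exp 1; linarith
  have hd' : (0:ℝ) < d := by exact_mod_cast hd
  have hlog1 : 0 ≤ Real.log (1 + 1/τ) := Real.log_nonneg (by nlinarith [one_div_pos.mpr hτ])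
  have hlog2 : 0 ≤ Real.log (1 + 1/lam) := Real.log_nonneg (by nlinarith [one_div_pos.mpr hlam])
  have htl := tau_div_le_log hτ
  have hτ1 : (0:ℝ) < 1 + τ := by linarith
  have hEfrac : (1:ℝ) ≤ E / (E - 1) := by
    rw [le_div_iff₀ (by linarith)]; linarith
  rcases le_or_gt N d with hcase | hcase
  · -- N ≤ d : log(1+N/(d lam)) ≤ log(1+1/lam)
    have harg : 1 + N / (d * lam) ≤ 1 + 1 / lam := by
      have : N / (d * lam) ≤ 1 / lam := by
        rw [div_le_div_iff₀ (by positivity) hlam]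
        calc N * lam ≤ d * lam := by nlinarith
          _ = 1 * (d * lam) := by ring
      linarith
    have hlog : Real.log (1 + N / (d * lam)) ≤ Real.log (1 + 1/lam) :=
      Real.log_le_log (by positivity) harg
    have key : N * (τ / (1 + τ)) ≤ d * Real.log (1 + 1/lam) := by
      calc N * (τ/(1+τ)) ≤ N * Real.log (1+τ) := by
            apply mul_le_mul_of_nonneg_left htl hN
        _ ≤ d * Real.log (1 + N/(d*lam)) := h
        _ ≤ d * Real.log (1 + 1/lam) := by
            apply mul_le_mul_of_nonneg_left hlog hd'.le
    have hN' : N ≤ ((1+τ)/τ) * (d * Real.log (1 + 1/lam)) := by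
      rw [← le_div_iff₀ (show (0:ℝ) < τ/(1+τ) by positivity)] at key
      calc N ≤ (d * Real.log (1+1/lam)) / (τ/(1+τ)) := key
        _ = ((1+τ)/τ) * (d * Real.log (1+1/lam)) := by
            field_simp
    calc N ≤ ((1+τ)/τ) * (d * Real.log (1 + 1/lam)) := hN'
      _ ≤ (E/(E-1)) * ((1+τ)/τ) * d * (Real.log (1+1/τ) + Real.log (1+1/lam)) := by
          nlinarith [mul_nonneg (mul_nonneg (div_nonneg hτ1.le hτ.le) hd'.le) hlog1,
            mul_nonneg (mul_nonneg (div_nonneg hτ1.le hτ.le) hd'.le) hlog2]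
  · -- d < N
    have hNpos : (0:ℝ) < N := lt_trans hd' hcase
    set x := N * τ / (d * (1 + τ)) with hxdef
    have hx : 0 < x := by positivity
    set L := Real.log (1 + 1/τ) + Real.log (1 + 1/lam) with hLdef
    have hfac1 : (0:ℝ) < 1 + 1/lam := by positivity
    have hfac2 : (0:ℝ) < 1 + 1/τ := by positivity
    have hprod : 1 + N / (d * lam) ≤ (1 + 1/lam) * ((1 + 1/τ) * x) := by
      have e1 : (1 + 1/τ) * x = N / d := by
        rw [hxdef]; field_simp; ring
      rw [e1]
      have : (1 + 1/lam) * (N/d) = N/d + N/(d*lam) := by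
        field_simp
      rw [this]
      have : (1:ℝ) ≤ N/d := by rw [le_div_iff₀ hd']; linarith
      linarith
    have hlogs : Real.log (1 + N/(d*lam)) ≤ Real.log (1+1/lam) + Real.log (1+1/τ) + Real.log x := by
      calc Real.log (1 + N/(d*lam)) ≤ Real.log ((1+1/lam) * ((1+1/τ) * x)) :=
            Real.log_le_log (by positivity) hprod
        _ = Real.log (1+1/lam) + (Real.log (1+1/τ) + Real.log x) := by
            rw [Real.log_mul hfac1.ne' (by positivity), Real.log_mul hfac2.ne' hx.ne']
        _ = _ := by ring
    have hlogx : Real.log x ≤ x / E := log_le_div_e hx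
    have key : N * (τ/(1+τ)) ≤ d * L + N * τ / ((1+τ) * E) := by
      have c1 : N * (τ/(1+τ)) ≤ d * (Real.log (1+1/lam) + Real.log (1+1/τ) + x/E) := by
        calc N * (τ/(1+τ)) ≤ N * Real.log (1+τ) := mul_le_mul_of_nonneg_left htl hN
          _ ≤ d * Real.log (1 + N/(d*lam)) := h
          _ ≤ d * (Real.log (1+1/lam) + Real.log (1+1/τ) + x/E) := by
              apply mul_le_mul_of_nonneg_left _ hd'.le
              linarith
      have hdx : d * (x/E) = N * τ / ((1+τ) * E) := by
        rw [hxdef]; field_simp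
      calc N * (τ/(1+τ)) ≤ d * (Real.log (1+1/lam) + Real.log (1+1/τ) + x/E) := c1
        _ = d * L + d * (x/E) := by rw [hLdef]; ring
        _ = d * L + N * τ / ((1+τ) * E) := by rw [hdx]
    have hE1 : (0:ℝ) < E - 1 := by linarith
    have hgoal : (E/(E-1)) * ((1+τ)/τ) * (d:ℝ) * L = (E*(1+τ)*d*L) / ((E-1)*τ) := by
      field_simp <;> ring
    rw [hgoal, le_div_iff₀ (by positivity)]
    have key' := mul_le_mul_of_nonneg_right key (show (0:ℝ) ≤ (1+τ)*E by positivity)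
    have e1 : N*(τ/(1+τ)) * ((1+τ)*E) = N*τ*E := by field_simp <;> ring
    have e2 : (d*L + N*τ/((1+τ)*E)) * ((1+τ)*E) = d*L*((1+τ)*E) + N*τ := by
      field_simp <;> ring
    rw [e1, e2] at key'
    ring_nf at key' ⊢
    linarith [key']

end Helpers

/-- Core-set size bound (elliptical potential): if each `φⱼ` (from the unit ball)
has uncertainty `φⱼᵀ Λ_{j-1}⁻¹ φⱼ > τ` w.r.t. the regularized Gram matrix of the
previously added vectors, then the number of such vectors is at most
`(e/(e-1)) ((1+τ)/τ) d (log(1+1/τ) + log(1+1/λ))`. -/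
theorem core_set_size_bound {d n : ℕ} (hd : 0 < d) (τ lam : ℝ) (hτ : 0 < τ)
    (hlam : 0 < lam)
    (φ : Fin n → Fin d → ℝ) (hφ : ∀ j, Real.sqrt (∑ i, (φ j i) ^ 2) ≤ 1)
    (Λ : Fin n → Matrix (Fin d) (Fin d) ℝ)
    (hΛ : ∀ j : Fin n, Λ j = lam • (1 : Matrix (Fin d) (Fin d) ℝ)
      + ∑ l ∈ Finset.univ.filter (fun l => l < j), vecMulVec (φ l) (φ l))
    (hbig : ∀ j : Fin n, τ < φ j ⬝ᵥ ((Λ j)⁻¹ *ᵥ φ j)) :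
    (n : ℝ) ≤ (Real.exp 1 / (Real.exp 1 - 1)) * ((1 + τ) / τ) * d *
      (Real.log (1 + 1 / τ) + Real.log (1 + 1 / lam)) := by
  classical
  set g : ℕ → Matrix (Fin d) (Fin d) ℝ := fun k =>
    lam • (1 : Matrix (Fin d) (Fin d) ℝ)
      + ∑ l ∈ Finset.univ.filter (fun l : Fin n => (l:ℕ) < k), vecMulVec (φ l) (φ l) with hg
  have hPSD : ∀ (s : Finset (Fin n)), (∑ l ∈ s, vecMulVec (φ l) (φ l)).PosSemidef := by
    intro s
    induction s using Finset.induction with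
    | empty => simpa using (Matrix.PosSemidef.zero (n := Fin d) (R := ℝ))
    | insert _ _ hnm ih => rw [Finset.sum_insert hnm]; exact (psd_vecMulVec _).add ih
  have hPD : ∀ k, (g k).PosDef := fun k => (smul_one_posDef hlam).add_posSemidef (hPSD _)
  have hτ1 : (0:ℝ) < 1 + τ := by linarith
  have hgΛ : ∀ j : Fin n, g j = Λ j := by
    intro j
    rw [hΛ j, hg]
    simp only [Fin.lt_def]
  have hstep : ∀ j : Fin n, g ((j:ℕ) + 1) = g j + vecMulVec (φ j) (φ j) := by
    intro j
    have hfil : Finset.univ.filter (fun l : Fin n => (l:ℕ) < (j:ℕ)+1)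
        = insert j (Finset.univ.filter (fun l : Fin n => (l:ℕ) < (j:ℕ))) := by
      ext l
      simp only [Finset.mem_filter, Finset.mem_insert, Finset.mem_univ, true_and, Fin.ext_iff]
      omega
    have hnot : j ∉ Finset.univ.filter (fun l : Fin n => (l:ℕ) < (j:ℕ)) := by simp
    rw [hg]
    simp only
    rw [hfil, Finset.sum_insert hnot]
    abel
  have hdet : ∀ k : ℕ, k ≤ n → lam ^ d * (1+τ) ^ k ≤ (g k).det := by
    intro k
    induction k with
    | zero =>
      intro _
      have hfil : Finset.univ.filter (fun l : Fin n => (l:ℕ) < 0) = ∅ := by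
        ext l; simp
      have : g 0 = lam • (1 : Matrix (Fin d) (Fin d) ℝ) := by
        rw [hg]; simp only [hfil, Finset.sum_empty, add_zero]
      rw [this, pow_zero, mul_one, Matrix.det_smul, Matrix.det_one, mul_one]
      simp
    | succ k ih =>
      intro hk
      have hkn : k < n := hk
      set j : Fin n := ⟨k, hkn⟩ with hj
      have hstep' : g (k+1) = g k + vecMulVec (φ j) (φ j) := hstep j
      rw [hstep', det_rank_one (hPD k) (φ j)]
      have hb : 1 + τ < 1 + φ j ⬝ᵥ ((g k)⁻¹ *ᵥ φ j) := by
        have := hbig j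
        rw [← hgΛ j] at this
        linarith
      have hdetpos : 0 < (g k).det := (hPD k).det_pos
      calc lam ^ d * (1+τ) ^ (k+1) = (lam ^ d * (1+τ) ^ k) * (1+τ) := by ring
        _ ≤ (g k).det * (1 + φ j ⬝ᵥ ((g k)⁻¹ *ᵥ φ j)) := by
            apply mul_le_mul (ih (le_of_lt hkn)) hb.le hτ1.le hdetpos.le
  have htrvv : ∀ l : Fin n, (vecMulVec (φ l) (φ l)).trace ≤ 1 := by
    intro l
    have htr : (vecMulVec (φ l) (φ l)).trace = ∑ i, (φ l i)^2 := by
      simp [Matrix.trace, Matrix.diag, vecMulVec, sq]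
    rw [htr]
    have hs : (0:ℝ) ≤ ∑ i, (φ l i)^2 := Finset.sum_nonneg fun i _ => sq_nonneg _
    calc ∑ i, (φ l i)^2 = (Real.sqrt (∑ i, (φ l i)^2))^2 := (Real.sq_sqrt hs).symm
      _ ≤ 1^2 := pow_le_pow_left₀ (Real.sqrt_nonneg _) (hφ l) 2
      _ = 1 := one_pow 2
  have htrace : (g n).trace ≤ lam * d + n := by
    have hfull : Finset.univ.filter (fun l : Fin n => (l:ℕ) < n) = Finset.univ := by
      ext l; simp [l.isLt]
    rw [hg]
    simp only [hfull, Matrix.trace_add, Matrix.trace_smul, Matrix.trace_one, Matrix.trace_sum,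
      smul_eq_mul]
    have : ∑ l : Fin n, (vecMulVec (φ l) (φ l)).trace ≤ ∑ _l : Fin n, (1:ℝ) :=
      Finset.sum_le_sum fun l _ => htrvv l
    simp only [Finset.sum_const, Finset.card_univ, Fintype.card_fin, nsmul_eq_mul,
      mul_one] at this
    have hcard : (Fintype.card (Fin d) : ℝ) = d := by simp
    rw [hcard]
    linarith
  have hd' : (0:ℝ) < d := by exact_mod_cast hd
  have htrnn : 0 ≤ (g n).trace := psd_trace_nonneg (hPD n).posSemidef
  have h1 : lam ^ d * (1+τ)^n ≤ ((lam * d + n)/d)^d := by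
    refine le_trans (hdet n le_rfl) (le_trans (det_le_trace_div_pow hd (hPD n).posSemidef) ?_)
    apply pow_le_pow_left₀ (div_nonneg htrnn hd'.le)
    exact div_le_div_of_nonneg_right htrace hd'.le
  have h2 : ((lam * d + n)/d)^d = lam ^ d * (1 + n/(d*lam))^d := by
    rw [← mul_pow]
    congr 1
    field_simp
  have h3 : (1+τ)^n ≤ (1 + (n:ℝ)/(d*lam))^d := by
    have hlamd : (0:ℝ) < lam ^ d := by positivity
    have := h1.trans_eq h2
    exact le_of_mul_le_mul_left this hlamd
  have h4 : (n:ℝ) * Real.log (1+τ) ≤ (d:ℝ) * Real.log (1 + (n:ℝ)/(d*lam)) := by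
    have hlog := Real.log_le_log (by positivity) h3
    rwa [Real.log_pow, Real.log_pow] at hlog
  exact final_calc hd hτ hlam (Nat.cast_nonneg n) h4
end

section
/- Let $\Lambda = \lambda I + \sum_{j=1}^n \phi_j \phi_j^\top$ with $\lambda > 0$, $\phi_j \in \mathbb{R}^d$, and suppose $\psi \in \mathbb{R}^d$ satisfies $\psi^\top \Lambda^{-1}\psi \leq \tau$. Let $(\epsilon_{k,j})_{1\leq k\leq K, 1\leq j\leq n}$ be a martingale difference array adapted to a filtration $(\mathcal{G}_t)$ (ordered lexicographically in $(k,j)$) with $|\epsilon_{k,j}| \leq H$ almost surely. Then with probability at least $1-\delta$, $\left| \frac{1}{K} \sum_{k=1}^K \sum_{j=1}^n \psi^\top \Lambda^{-1}\phi_j\, \epsilon_{k,j} \right| \leq H\sqrt{\frac{2\tau \log(2/\delta)}{K}}$. -/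
open MeasureTheory BigOperators Matrix
lemma sumsq_le {d n : ℕ} (lam τ : ℝ) (hlam : 0 < lam)
    (φ : ℕ → Fin d → ℝ) (Λ : Matrix (Fin d) (Fin d) ℝ)
    (hΛ : Λ = lam • (1 : Matrix (Fin d) (Fin d) ℝ)
      + ∑ j ∈ Finset.range n, vecMulVec (φ j) (φ j))
    (ψ : Fin d → ℝ) (hψ : ψ ⬝ᵥ (Λ⁻¹ *ᵥ ψ) ≤ τ) :
    ∑ j ∈ Finset.range n, (ψ ⬝ᵥ (Λ⁻¹ *ᵥ φ j))^2 ≤ τ := by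
  have hvv : ∀ (a x : Fin d → ℝ), vecMulVec a a *ᵥ x = (a ⬝ᵥ x) • a := by
    intro a x; ext i
    simp [mulVec, vecMulVec_apply, dotProduct, Finset.mul_sum, mul_comm, mul_assoc, mul_left_comm]
  have hsummv : ∀ (x : Fin d → ℝ),
      (∑ j ∈ Finset.range n, vecMulVec (φ j) (φ j)) *ᵥ x
        = ∑ j ∈ Finset.range n, (φ j ⬝ᵥ x) • (φ j) := by
    intro x; ext i
    rw [show ((∑ j ∈ Finset.range n, vecMulVec (φ j) (φ j)) *ᵥ x) i
        = ∑ j ∈ Finset.range n, ((vecMulVec (φ j) (φ j)) *ᵥ x) i from ?_]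
    · simp [hvv]
    · simp only [mulVec, dotProduct, Finset.sum_apply, Matrix.sum_apply, Finset.sum_mul]
      rw [Finset.sum_comm]
  have hdotsum : ∀ (x : Fin d → ℝ) (v : ℕ → Fin d → ℝ),
      x ⬝ᵥ (∑ j ∈ Finset.range n, v j) = ∑ j ∈ Finset.range n, x ⬝ᵥ v j := by
    intro x v
    simp only [dotProduct, Finset.sum_apply, Finset.mul_sum]
    rw [Finset.sum_comm]
  have hquad : ∀ x : Fin d → ℝ, x ⬝ᵥ (Λ *ᵥ x) = lam * (x ⬝ᵥ x)
      + ∑ j ∈ Finset.range n, (φ j ⬝ᵥ x)^2 := by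
    intro x
    rw [hΛ, add_mulVec, dotProduct_add, smul_mulVec, one_mulVec, dotProduct_smul,
      hsummv, hdotsum]
    congr 1
    refine Finset.sum_congr rfl fun j _ => ?_
    rw [dotProduct_smul, smul_eq_mul, dotProduct_comm x (φ j)]; ring
  have hT : Λᵀ = Λ := by
    rw [hΛ]; ext i j
    simp [Matrix.sum_apply, vecMulVec_apply, Matrix.one_apply, mul_comm, eq_comm]
  have hherm : Λ.IsHermitian := by
    ext i j
    simp only [conjTranspose_apply, RCLike.star_def, starRingEnd_apply, star_trivial]
    exact congrFun (congrFun hT i) j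
  have hpd : Λ.PosDef := by
    refine Matrix.PosDef.of_dotProduct_mulVec_pos hherm fun x hx => ?_
    have hstar : star x = x := by ext i; simp
    rw [hstar, hquad]
    have h1 : 0 < x ⬝ᵥ x := by
      rcases Function.ne_iff.1 hx with ⟨i, hi⟩
      have h0 : (0:ℝ) < x i * x i := mul_self_pos.2 hi
      calc (0:ℝ) < x i * x i := h0
        _ ≤ x ⬝ᵥ x :=
          Finset.single_le_sum (f := fun i => x i * x i)
            (fun i _ => mul_self_nonneg _) (Finset.mem_univ i)
    have h2 : (0:ℝ) ≤ ∑ j ∈ Finset.range n, (φ j ⬝ᵥ x)^2 :=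
      Finset.sum_nonneg fun j _ => sq_nonneg _
    nlinarith
  have hdet : IsUnit Λ.det := hpd.det_pos.ne'.isUnit
  have hΛinv : Λ * Λ⁻¹ = 1 := mul_nonsing_inv Λ hdet
  have hinvsym : Λ⁻¹ᵀ = Λ⁻¹ := by rw [transpose_nonsing_inv, hT]
  set u : Fin d → ℝ := Λ⁻¹ *ᵥ ψ with hu
  have hc : ∀ j, ψ ⬝ᵥ (Λ⁻¹ *ᵥ φ j) = φ j ⬝ᵥ u := by
    intro j
    rw [dotProduct_mulVec, show ψ ᵥ* Λ⁻¹ = u from ?_, dotProduct_comm]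
    rw [← hinvsym, vecMul_transpose]
  have hΛu : Λ *ᵥ u = ψ := by rw [hu, mulVec_mulVec, hΛinv, one_mulVec]
  have huu : (0:ℝ) ≤ u ⬝ᵥ u := Finset.sum_nonneg fun i _ => mul_self_nonneg _
  have key := hquad u
  rw [hΛu] at key
  have hups : u ⬝ᵥ ψ ≤ τ := by rwa [dotProduct_comm] at hψ
  calc ∑ j ∈ Finset.range n, (ψ ⬝ᵥ (Λ⁻¹ *ᵥ φ j))^2
      = ∑ j ∈ Finset.range n, (φ j ⬝ᵥ u)^2 := by
        refine Finset.sum_congr rfl fun j _ => ?_; rw [hc]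
    _ = u ⬝ᵥ ψ - lam * (u ⬝ᵥ u) := by linarith [key]
    _ ≤ u ⬝ᵥ ψ := by nlinarith
    _ ≤ τ := hups

-- pointwise convexity inequality
lemma exp_le_cosh_add (s b x : ℝ) (hb : 0 ≤ b) (hx : |x| ≤ b) :
    Real.exp (s * x) ≤ Real.cosh (s * b)
      + (if b = 0 then 0 else Real.sinh (s * b) / b) * x := by
  rcases eq_or_lt_of_le hb with hb0 | hb0
  · have : x = 0 := by rw [← hb0] at hx; exact abs_eq_zero.1 (le_antisymm hx (abs_nonneg _))
    simp [this, ← hb0]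
  · rw [if_neg hb0.ne']
    have hx1 : -b ≤ x := neg_le_of_abs_le hx
    have hx2 : x ≤ b := le_of_abs_le hx
    set t : ℝ := (x + b) / (2 * b) with ht
    have ht0 : 0 ≤ t := by rw [ht]; apply div_nonneg (by linarith) (by linarith)
    have ht1 : t ≤ 1 := by rw [ht, div_le_one (by positivity)]; linarith
    have hconv := convexOn_exp.2 (Set.mem_univ (-(s*b))) (Set.mem_univ (s*b))
      (by linarith : (0:ℝ) ≤ 1 - t) ht0 (by ring)
    have harg : (1 - t) • (-(s*b)) + t • (s*b) = s * x := by
      rw [smul_eq_mul, smul_eq_mul, ht]; field_simp; ring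
    rw [harg] at hconv
    have hc : Real.cosh (s*b) = (Real.exp (s*b) + Real.exp (-(s*b)))/2 := by
      rw [Real.cosh_eq]
    have hs : Real.sinh (s*b) = (Real.exp (s*b) - Real.exp (-(s*b)))/2 := by
      rw [Real.sinh_eq]
    have : (1 - t) • Real.exp (-(s*b)) + t • Real.exp (s*b)
        = Real.cosh (s * b) + Real.sinh (s * b) / b * x := by
      rw [hc, hs, smul_eq_mul, smul_eq_mul, ht]
      field_simp
      ring
    linarith [hconv, this.symm.le]

lemma condexp_exp_le {Ω : Type*} {m0 : MeasurableSpace Ω} {μ : Measure Ω}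
    [IsProbabilityMeasure μ] {m : MeasurableSpace Ω} (hm : m ≤ m0)
    (X : Ω → ℝ) (hXm : AEStronglyMeasurable[m0] X μ)
    (h0 : μ[X|m] =ᵐ[μ] 0) (b s : ℝ) (hb : 0 ≤ b)
    (hbd : ∀ᵐ ω ∂μ, |X ω| ≤ b) :
    μ[fun ω => Real.exp (s * X ω)|m] ≤ᵐ[μ] fun _ => Real.exp (s^2 * b^2 / 2) := by
  set A : ℝ := if b = 0 then 0 else Real.sinh (s * b) / b with hA
  have hXint : Integrable X μ :=
    (integrable_const b).mono' hXm (by filter_upwards [hbd] with ω h; rwa [Real.norm_eq_abs])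
  have heint : Integrable (fun ω => Real.exp (s * X ω)) μ := by
    refine (integrable_const (Real.exp (|s| * b))).mono'
      (Real.continuous_exp.comp_aestronglyMeasurable (hXm.const_mul s)) ?_
    filter_upwards [hbd] with ω h
    rw [Real.norm_eq_abs, Real.abs_exp]
    apply Real.exp_le_exp.2
    calc s * X ω ≤ |s * X ω| := le_abs_self _
      _ = |s| * |X ω| := abs_mul _ _
      _ ≤ |s| * b := by apply mul_le_mul_of_nonneg_left h (abs_nonneg s)
  have hgint : Integrable (fun ω => Real.cosh (s*b) + A * X ω) μ :=
    (integrable_const _).add (hXint.const_mul A)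
  have hle : (fun ω => Real.exp (s * X ω)) ≤ᵐ[μ] fun ω => Real.cosh (s*b) + A * X ω := by
    filter_upwards [hbd] with ω h
    exact exp_le_cosh_add s b (X ω) hb h
  have h1 := condExp_mono (m := m) heint hgint hle
  have h2 : μ[fun ω => Real.cosh (s*b) + A * X ω|m]
      =ᵐ[μ] fun ω => Real.cosh (s*b) + A * (μ[X|m]) ω := by
    have := condExp_add (μ := μ) (m := m) (integrable_const (Real.cosh (s*b))) (hXint.const_mul A)
    refine this.trans ?_
    have hsm := condExp_smul (μ := μ) (m := m) A X
    filter_upwards [hsm] with ω h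
    simp only [Pi.add_apply]
    rw [condExp_const hm]
    have : (μ[(fun ω => A * X ω)|m]) ω = (μ[A • X|m]) ω := by congr 1
    rw [this, h]; simp
  have h3 : (fun ω => Real.cosh (s*b) + A * (μ[X|m]) ω)
      ≤ᵐ[μ] fun _ => Real.exp (s^2*b^2/2) := by
    filter_upwards [h0] with ω h
    simp only [h, Pi.zero_apply, mul_zero, add_zero]
    calc Real.cosh (s*b) ≤ Real.exp ((s*b)^2/2) := Real.cosh_le_exp_half_sq _
      _ = Real.exp (s^2*b^2/2) := by ring_nf
  exact h1.trans (h2.trans_le h3)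

lemma integrable_exp_of_bdd {Ω : Type*} {m0 : MeasurableSpace Ω} {μ : Measure Ω}
    [IsProbabilityMeasure μ] {X : Ω → ℝ} (hXm : AEStronglyMeasurable X μ)
    (C : ℝ) (hbd : ∀ᵐ ω ∂μ, |X ω| ≤ C) :
    Integrable (fun ω => Real.exp (X ω)) μ := by
  refine (integrable_const (Real.exp C)).mono'
    (Real.continuous_exp.comp_aestronglyMeasurable hXm) ?_
  filter_upwards [hbd] with ω h
  rw [Real.norm_eq_abs, Real.abs_exp]
  exact Real.exp_le_exp.2 ((le_abs_self _).trans h)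

lemma mgf_sum_le {Ω : Type*} {m0 : MeasurableSpace Ω} {μ : Measure Ω}
    [IsProbabilityMeasure μ] (𝒢 : Filtration ℕ m0) (ε : ℕ → Ω → ℝ)
    (hadapted : ∀ t, StronglyMeasurable[𝒢 (t + 1)] (ε t))
    (hmds : ∀ t, ∀ᵐ ω ∂μ, (μ[ε t | 𝒢 t]) ω = 0)
    (H : ℝ) (hH : 0 < H) (hbdd : ∀ t, ∀ᵐ ω ∂μ, |ε t ω| ≤ H)
    (a : ℕ → ℝ) (s : ℝ) (T : ℕ) :
    Integrable (fun ω => Real.exp (s * ∑ t ∈ Finset.range T, a t * ε t ω)) μ ∧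
    ∫ ω, Real.exp (s * ∑ t ∈ Finset.range T, a t * ε t ω) ∂μ
      ≤ Real.exp (s^2 * H^2 * (∑ t ∈ Finset.range T, (a t)^2) / 2) := by
  have hεm : ∀ t, StronglyMeasurable (ε t) := fun t => (hadapted t).mono (𝒢.le (t+1))
  have hsum_eq : ∀ T, (fun ω => ∑ t ∈ Finset.range T, a t * ε t ω)
      = ∑ t ∈ Finset.range T, (fun ω => a t * ε t ω) := by
    intro T; funext ω; simp
  have hSm : ∀ T, StronglyMeasurable (fun ω => s * ∑ t ∈ Finset.range T, a t * ε t ω) := by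
    intro T
    have h1 : StronglyMeasurable (∑ t ∈ Finset.range T, (fun ω => a t * ε t ω)) :=
      Finset.stronglyMeasurable_sum _ fun t _ => (hεm t).const_mul (a t)
    rw [← hsum_eq T] at h1
    exact h1.const_mul s
  have hSbd : ∀ T, ∀ᵐ ω ∂μ, |s * ∑ t ∈ Finset.range T, a t * ε t ω|
      ≤ |s| * ∑ t ∈ Finset.range T, |a t| * H := by
    intro T
    filter_upwards [ae_all_iff.2 hbdd] with ω h
    rw [abs_mul]
    refine mul_le_mul_of_nonneg_left ?_ (abs_nonneg s)
    calc |∑ t ∈ Finset.range T, a t * ε t ω| ≤ ∑ t ∈ Finset.range T, |a t * ε t ω| :=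
        Finset.abs_sum_le_sum_abs _ _
      _ ≤ ∑ t ∈ Finset.range T, |a t| * H := by
        refine Finset.sum_le_sum fun t _ => ?_
        rw [abs_mul]
        exact mul_le_mul_of_nonneg_left (h t) (abs_nonneg _)
  have hint : ∀ T, Integrable (fun ω => Real.exp (s * ∑ t ∈ Finset.range T, a t * ε t ω)) μ :=
    fun T => integrable_exp_of_bdd (hSm T).aestronglyMeasurable _ (hSbd T)
  refine ⟨hint T, ?_⟩
  induction T with
  | zero => simp
  | succ T ih =>
    set f : Ω → ℝ := fun ω => Real.exp (s * ∑ t ∈ Finset.range T, a t * ε t ω) with hf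
    set e : Ω → ℝ := fun ω => Real.exp (s * (a T * ε T ω)) with he
    have hfe : (fun ω => Real.exp (s * ∑ t ∈ Finset.range (T+1), a t * ε t ω)) = f * e := by
      funext ω
      simp only [hf, he, Pi.mul_apply, Finset.sum_range_succ, mul_add, Real.exp_add]
    have hfm : StronglyMeasurable[𝒢 T] f := by
      refine (Real.continuous_exp.comp_stronglyMeasurable ?_)
      have h1 : StronglyMeasurable[𝒢 T] (∑ t ∈ Finset.range T, (fun ω => a t * ε t ω)) :=
        Finset.stronglyMeasurable_sum _ fun t ht =>
          ((hadapted t).mono (𝒢.mono (Finset.mem_range.1 ht))).const_mul (a t)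
      rw [← hsum_eq T] at h1
      exact h1.const_mul s
    have hint_e : Integrable e μ := by
      refine integrable_exp_of_bdd (((hεm T).const_mul (a T)).const_mul s).aestronglyMeasurable
        (|s| * (|a T| * H)) ?_
      filter_upwards [hbdd T] with ω h
      rw [abs_mul, abs_mul]
      exact mul_le_mul_of_nonneg_left
        (mul_le_mul_of_nonneg_left h (abs_nonneg _)) (abs_nonneg s)
    have hint_fe : Integrable (f * e) μ := hfe ▸ hint (T+1)
    have hmul : μ[f * e|𝒢 T] =ᵐ[μ] f * μ[e|𝒢 T] :=
      condExp_mul_of_stronglyMeasurable_left hfm hint_fe hint_e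
    have h0' : μ[(fun ω => a T * ε T ω)|𝒢 T] =ᵐ[μ] 0 := by
      have heq : (fun ω => a T * ε T ω) = (a T) • (ε T) := by funext ω; simp
      rw [heq]
      refine (condExp_smul (a T) (ε T) (𝒢 T)).trans ?_
      filter_upwards [hmds T] with ω h
      simp [h]
    have hcond : μ[e|𝒢 T] ≤ᵐ[μ] fun _ => Real.exp (s^2 * (|a T| * H)^2 / 2) := by
      refine condexp_exp_le (𝒢.le T) _
        (((hεm T).const_mul (a T)).aestronglyMeasurable) h0' (|a T| * H) s
        (by positivity) ?_
      filter_upwards [hbdd T] with ω h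
      rw [abs_mul]
      exact mul_le_mul_of_nonneg_left h (abs_nonneg _)
    have hC : Real.exp (s^2 * (|a T| * H)^2 / 2) = Real.exp (s^2 * H^2 * (a T)^2 / 2) := by
      rw [mul_pow, sq_abs]; ring_nf
    calc ∫ ω, Real.exp (s * ∑ t ∈ Finset.range (T+1), a t * ε t ω) ∂μ
        = ∫ ω, (f * e) ω ∂μ := by rw [hfe]
      _ = ∫ ω, (μ[f * e|𝒢 T]) ω ∂μ := (integral_condExp (𝒢.le T)).symm
      _ ≤ ∫ ω, f ω * Real.exp (s^2 * H^2 * (a T)^2 / 2) ∂μ := by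
          refine integral_mono_ae integrable_condExp ((hint T).mul_const _) ?_
          filter_upwards [hmul, hcond] with ω h1 h2
          rw [h1]
          simp only [Pi.mul_apply]
          rw [← hC]
          exact mul_le_mul_of_nonneg_left h2 (Real.exp_nonneg _)
      _ = (∫ ω, f ω ∂μ) * Real.exp (s^2 * H^2 * (a T)^2 / 2) := integral_mul_const _ _
      _ ≤ Real.exp (s^2 * H^2 * (∑ t ∈ Finset.range T, (a t)^2) / 2)
            * Real.exp (s^2 * H^2 * (a T)^2 / 2) :=
          mul_le_mul_of_nonneg_right ih (Real.exp_nonneg _)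
      _ = Real.exp (s^2 * H^2 * (∑ t ∈ Finset.range (T+1), (a t)^2) / 2) := by
          rw [← Real.exp_add, Finset.sum_range_succ]; congr 1; ring

lemma tail_le {Ω : Type*} {m0 : MeasurableSpace Ω} {μ : Measure Ω}
    [IsProbabilityMeasure μ] (S : Ω → ℝ) (x V : ℝ) (hx : 0 < x) (hV : 0 < V)
    (hint : ∀ s : ℝ, Integrable (fun ω => Real.exp (s * S ω)) μ)
    (hmgf : ∀ s : ℝ, ∫ ω, Real.exp (s * S ω) ∂μ ≤ Real.exp (s^2 * V / 2)) :
    (μ {ω | x ≤ S ω}).toReal ≤ Real.exp (-(x^2) / (2*V)) := by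
  set s : ℝ := x / V with hs
  have hs0 : 0 ≤ s := by positivity
  calc (μ {ω | x ≤ S ω}).toReal
      ≤ Real.exp (-s * x) * ProbabilityTheory.mgf S μ s :=
        ProbabilityTheory.measure_ge_le_exp_mul_mgf x hs0 (hint s)
    _ = Real.exp (-s * x) * ∫ ω, Real.exp (s * S ω) ∂μ := rfl
    _ ≤ Real.exp (-s * x) * Real.exp (s^2 * V / 2) :=
        mul_le_mul_of_nonneg_left (hmgf s) (Real.exp_nonneg _)
    _ = Real.exp (-s * x + s^2 * V / 2) := (Real.exp_add _ _).symm
    _ = Real.exp (-(x^2) / (2*V)) := by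
        congr 1
        rw [hs]
        field_simp
        ring

/-- Azuma–Hoeffding bound for the martingale-difference array term `J₁`: if
`ψᵀ Λ⁻¹ ψ ≤ τ` and `(ε_t)` (the lexicographic flattening of `(ε_{k,j})`, with
`t = k·n + j`) is a bounded martingale difference sequence, then with probability
at least `1 - δ`,
`|(1/K) ∑_{k,j} ψᵀ Λ⁻¹ φⱼ ε_{k,j}| ≤ H √(2 τ log(2/δ) / K)`. -/
theorem azuma_mds_bound {Ω : Type*} {m0 : MeasurableSpace Ω}
    {μ : Measure Ω} [IsProbabilityMeasure μ]
    {d : ℕ} (K n : ℕ) (hK : 1 ≤ K) (hn : 1 ≤ n)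
    (lam τ H : ℝ) (hlam : 0 < lam) (hτ : 0 < τ) (hH : 0 < H)
    (φ : ℕ → Fin d → ℝ) (Λ : Matrix (Fin d) (Fin d) ℝ)
    (hΛ : Λ = lam • (1 : Matrix (Fin d) (Fin d) ℝ)
      + ∑ j ∈ Finset.range n, vecMulVec (φ j) (φ j))
    (ψ : Fin d → ℝ) (hψ : ψ ⬝ᵥ (Λ⁻¹ *ᵥ ψ) ≤ τ)
    (𝒢 : Filtration ℕ m0) (ε : ℕ → Ω → ℝ)
    (hadapted : ∀ t, StronglyMeasurable[𝒢 (t + 1)] (ε t))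
    (hmds : ∀ t, ∀ᵐ ω ∂μ, (μ[ε t | 𝒢 t]) ω = 0)
    (hbdd : ∀ t, ∀ᵐ ω ∂μ, |ε t ω| ≤ H)
    (δ : ℝ) (hδ0 : 0 < δ) (hδ1 : δ < 1) :
    ENNReal.ofReal (1 - δ) ≤
      μ {ω | |(1 / (K : ℝ)) * ∑ t ∈ Finset.range (K * n),
          (ψ ⬝ᵥ (Λ⁻¹ *ᵥ φ (t % n))) * ε t ω|
        ≤ H * Real.sqrt (2 * τ * Real.log (2 / δ) / K)} := by
  classical
  set a : ℕ → ℝ := fun t => ψ ⬝ᵥ (Λ⁻¹ *ᵥ φ (t % n)) with ha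
  set c : ℕ → ℝ := fun j => ψ ⬝ᵥ (Λ⁻¹ *ᵥ φ j) with hc
  set B : ℝ := H * Real.sqrt (2 * τ * Real.log (2 / δ) / K) with hB
  set S : Ω → ℝ := fun ω => ∑ t ∈ Finset.range (K * n), a t * ε t ω with hS
  have hK0 : (0:ℝ) < K := by exact_mod_cast hK
  have hL : 0 < Real.log (2 / δ) := Real.log_pos (by rw [lt_div_iff₀ hδ0]; linarith)
  have hB0 : 0 < B := by
    apply mul_pos hH
    apply Real.sqrt_pos.2
    positivity
  -- the sum of squared coefficients
  have hcsum : ∑ j ∈ Finset.range n, (c j)^2 ≤ τ := sumsq_le lam τ hlam φ Λ hΛ ψ hψ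
  have hper : ∀ k : ℕ, ∑ t ∈ Finset.range (k * n), (a t)^2
      = k * ∑ j ∈ Finset.range n, (c j)^2 := by
    intro k
    induction k with
    | zero => simp
    | succ k ih =>
      have : (k+1) * n = k * n + n := by ring
      rw [this, Finset.sum_range_add, ih]
      have : ∑ i ∈ Finset.range n, (a (k * n + i))^2
          = ∑ j ∈ Finset.range n, (c j)^2 := by
        refine Finset.sum_congr rfl fun i hi => ?_
        have : (k * n + i) % n = i := Nat.mul_add_mod_of_lt (Finset.mem_range.1 hi)
        simp [ha, hc, this]
      rw [this]; push_cast; ring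
  set SQ : ℝ := ∑ t ∈ Finset.range (K * n), (a t)^2 with hSQ
  have hSQK : SQ ≤ K * τ := by
    rw [hSQ, hper K]
    exact mul_le_mul_of_nonneg_left hcsum (by positivity)
  have hSQnn : 0 ≤ SQ := Finset.sum_nonneg fun t _ => sq_nonneg _
  -- measurability of the goal set
  have hεm : ∀ t, StronglyMeasurable (ε t) := fun t => (hadapted t).mono (𝒢.le (t+1))
  have hSmeas : Measurable S := by
    apply Finset.measurable_sum
    intro t _
    exact ((hεm t).measurable.const_mul (a t))
  have hEmeas : MeasurableSet {ω | |(1 / (K : ℝ)) * S ω| ≤ B} := by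
    apply measurableSet_le
    · exact (hSmeas.const_mul _).abs
    · exact measurable_const
  rcases eq_or_lt_of_le hSQnn with hz | hpos
  · -- all coefficients vanish
    have hall : ∀ t ∈ Finset.range (K * n), (a t)^2 = 0 := by
      intro t ht
      exact (Finset.sum_eq_zero_iff_of_nonneg (fun t _ => sq_nonneg _)).1 hz.symm t ht
    have hSz : ∀ ω, S ω = 0 := by
      intro ω
      refine Finset.sum_eq_zero fun t ht => ?_
      have hat : a t = 0 := by have := hall t ht; nlinarith
      rw [hat, zero_mul]
    have : {ω | |(1 / (K : ℝ)) * S ω| ≤ B} = Set.univ := by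
      ext ω; simp [hSz ω, hB0.le]
    rw [this]
    simp only [measure_univ]
    exact ENNReal.ofReal_le_one.2 (by linarith)
  · set V : ℝ := H^2 * SQ with hV
    have hV0 : 0 < V := by positivity
    have hmgf := fun s => mgf_sum_le 𝒢 ε hadapted hmds H hH hbdd a s (K * n)
    have hint : ∀ s : ℝ, Integrable (fun ω => Real.exp (s * S ω)) μ := fun s => (hmgf s).1
    have hbound : ∀ s : ℝ, ∫ ω, Real.exp (s * S ω) ∂μ ≤ Real.exp (s^2 * V / 2) := by
      intro s
      refine ((hmgf s).2).trans_eq ?_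
      rw [hV, hSQ]; ring_nf
    have hintneg : ∀ s : ℝ, Integrable (fun ω => Real.exp (s * (-S ω))) μ := by
      intro s
      have : (fun ω => Real.exp (s * (-S ω))) = fun ω => Real.exp ((-s) * S ω) := by
        funext ω; ring_nf
      rw [this]; exact hint (-s)
    have hboundneg : ∀ s : ℝ, ∫ ω, Real.exp (s * (-S ω)) ∂μ ≤ Real.exp (s^2 * V / 2) := by
      intro s
      have h1 : (fun ω => Real.exp (s * (-S ω))) = fun ω => Real.exp ((-s) * S ω) := by
        funext ω; ring_nf
      rw [h1]
      refine (hbound (-s)).trans_eq ?_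
      ring_nf
    set x : ℝ := K * B with hx
    have hx0 : 0 < x := mul_pos hK0 hB0
    have htail1 := tail_le S x V hx0 hV0 hint hbound
    have htail2 := tail_le (fun ω => -S ω) x V hx0 hV0 hintneg hboundneg
    -- the exponential bound is at most δ/2
    have hexp : Real.exp (-(x^2) / (2*V)) ≤ δ / 2 := by
      have hxsq : x^2 = 2 * K * H^2 * τ * Real.log (2/δ) := by
        rw [hx, hB, mul_pow, mul_pow, Real.sq_sqrt (by positivity)]
        field_simp
      have harg : Real.log (2/δ) ≤ x^2 / (2*V) := by
        rw [hxsq, hV]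
        rw [le_div_iff₀ (by positivity)]
        have h2 : 2 * (H^2 * SQ) ≤ 2 * (H^2 * (K * τ)) := by nlinarith
        nlinarith [hL]
      calc Real.exp (-(x^2) / (2*V)) ≤ Real.exp (-Real.log (2/δ)) := by
            apply Real.exp_le_exp.2
            rw [neg_div]
            linarith
        _ = δ / 2 := by
            rw [Real.exp_neg, Real.exp_log (by positivity)]
            field_simp
    have hmu1 : μ {ω | x ≤ S ω} ≤ ENNReal.ofReal (δ/2) := by
      rw [ENNReal.le_ofReal_iff_toReal_le (measure_ne_top _ _) (by positivity)]
      exact htail1.trans hexp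
    have hmu2 : μ {ω | x ≤ -S ω} ≤ ENNReal.ofReal (δ/2) := by
      rw [ENNReal.le_ofReal_iff_toReal_le (measure_ne_top _ _) (by positivity)]
      exact htail2.trans hexp
    have hsubset : {ω | |(1 / (K : ℝ)) * S ω| ≤ B}ᶜ ⊆ {ω | x ≤ S ω} ∪ {ω | x ≤ -S ω} := by
      intro ω hω
      simp only [Set.mem_compl_iff, Set.mem_setOf_eq, not_le] at hω
      have h1 : x ≤ |S ω| := by
        rw [abs_mul, abs_of_pos (by positivity : (0:ℝ) < 1 / (K:ℝ))] at hω
        rw [hx]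
        have := hω.le
        calc K * B ≤ K * (1 / K * |S ω|) := by
              apply mul_le_mul_of_nonneg_left this hK0.le
          _ = |S ω| := by field_simp
      rcases le_abs.1 h1 with h | h
      · exact Or.inl h
      · exact Or.inr h
    have hcompl : μ {ω | |(1 / (K : ℝ)) * S ω| ≤ B}ᶜ ≤ ENNReal.ofReal δ := by
      calc μ {ω | |(1 / (K : ℝ)) * S ω| ≤ B}ᶜ
          ≤ μ ({ω | x ≤ S ω} ∪ {ω | x ≤ -S ω}) := measure_mono hsubset
        _ ≤ μ {ω | x ≤ S ω} + μ {ω | x ≤ -S ω} := measure_union_le _ _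
        _ ≤ ENNReal.ofReal (δ/2) + ENNReal.ofReal (δ/2) := add_le_add hmu1 hmu2
        _ = ENNReal.ofReal δ := by
            rw [← ENNReal.ofReal_add (by positivity) (by positivity)]
            norm_num
    have hμE : μ {ω | |(1 / (K : ℝ)) * S ω| ≤ B}
        = 1 - μ {ω | |(1 / (K : ℝ)) * S ω| ≤ B}ᶜ := by
      rw [← prob_compl_eq_one_sub hEmeas.compl, compl_compl]
    rw [hμE]
    calc ENNReal.ofReal (1 - δ) = 1 - ENNReal.ofReal δ := by
          rw [ENNReal.ofReal_sub 1 hδ0.le, ENNReal.ofReal_one]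
      _ ≤ 1 - μ {ω | |(1 / (K : ℝ)) * S ω| ≤ B}ᶜ := tsub_le_tsub_left hcompl 1
end
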